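/- Let an elitist (1+1) EA with fixed mutation kernel P^m(x,y) act on a finite set S, accepting a mutant y from parent x iff f(y) > f(x). Let f and g be two fitness functions on S with the same optimal set S_opt, and let G_f, G_g denote the expected hitting times of S_opt under fitness f and g respectively (both assumed finite). If f satisfies the monotonically decreasing condition — for any two points x, y with G_f(x) < G_f(y) one has f(x) > f(y) — then G_f(x) ≤ G_g(x) for every x ∈ S. -/

import Mathlib

open Finset

/-- Transition kernel of the strictly elitist (1+1) EA with mutation kernel
`Pm` and fitness `f`: a mutant `y ≠ x` is accepted iff `f y > f x`, otherwise
the EA stays at `x`. -/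
noncomputable def eaP {S : Type*} [Fintype S] [DecidableEq S]
    (Pm : S → S → ℝ) (f : S → ℝ) (x y : S) : ℝ :=
  if y = x then 1 - ∑ z, (if f x < f z then Pm x z else 0)
  else if f x < f y then Pm x y else 0

lemma eaP_rowsum {S : Type*} [Fintype S] [DecidableEq S]
    (Pm : S → S → ℝ) (f : S → ℝ) (x : S) : ∑ y, eaP Pm f x y = 1 := by
  have h1 : ∑ y, eaP Pm f x y
      = eaP Pm f x x + ∑ y ∈ Finset.univ.erase x, eaP Pm f x y :=
    (Finset.add_sum_erase _ _ (Finset.mem_univ x)).symm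
  have h2 : ∑ y ∈ Finset.univ.erase x, eaP Pm f x y
      = ∑ y ∈ Finset.univ.erase x, (if f x < f y then Pm x y else 0) := by
    refine Finset.sum_congr rfl (fun y hy => ?_)
    have hne : y ≠ x := Finset.ne_of_mem_erase hy
    simp [eaP, hne]
  have h3 : ∑ y ∈ Finset.univ.erase x, (if f x < f y then Pm x y else 0)
      = ∑ y, (if f x < f y then Pm x y else 0) :=
    Finset.sum_erase _ (by simp)
  have he : eaP Pm f x x = 1 - ∑ z, (if f x < f z then Pm x z else 0) := by
    simp [eaP]
  rw [h1, h2, h3, he]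
  ring

lemma eaP_nonneg {S : Type*} [Fintype S] [DecidableEq S]
    (Pm : S → S → ℝ) (f : S → ℝ)
    (hPm0 : ∀ x y, 0 ≤ Pm x y) (hPm1 : ∀ x, ∑ y, Pm x y = 1) (x y : S) :
    0 ≤ eaP Pm f x y := by
  by_cases hyx : y = x
  · have he : eaP Pm f x x = 1 - ∑ z, (if f x < f z then Pm x z else 0) := by
      simp [eaP]
    rw [hyx, he]
    have hle : ∑ z, (if f x < f z then Pm x z else 0) ≤ ∑ z, Pm x z :=
      Finset.sum_le_sum (fun z _ => by
        by_cases h : f x < f z <;> simp [h, hPm0 x z])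
    have := hPm1 x
    linarith
  · have he : eaP Pm f x y = if f x < f y then Pm x y else 0 := by
      simp [eaP, hyx]
    rw [he]
    by_cases h : f x < f y <;> simp [h, hPm0 x y]

lemma eaP_sum_mul {S : Type*} [Fintype S] [DecidableEq S]
    (Pm : S → S → ℝ) (f G : S → ℝ) (x : S) :
    ∑ y, eaP Pm f x y * G y
      = G x + ∑ y, (if f x < f y then Pm x y * (G y - G x) else 0) := by
  have h1 : ∀ y, eaP Pm f x y * G y
      = eaP Pm f x y * G x + (if f x < f y then Pm x y * (G y - G x) else 0) := by
    intro y
    by_cases hyx : y = x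
    · subst hyx; simp
    · simp only [eaP, if_neg hyx]
      by_cases hc : f x < f y <;> simp [hc] <;> ring
  calc ∑ y, eaP Pm f x y * G y
      = ∑ y, (eaP Pm f x y * G x + (if f x < f y then Pm x y * (G y - G x) else 0)) :=
        Finset.sum_congr rfl (fun y _ => h1 y)
    _ = (∑ y, eaP Pm f x y) * G x
        + ∑ y, (if f x < f y then Pm x y * (G y - G x) else 0) := by
        rw [Finset.sum_add_distrib, ← Finset.sum_mul]
    _ = G x + ∑ y, (if f x < f y then Pm x y * (G y - G x) else 0) := by
        rw [eaP_rowsum]; ring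

/-- Criterion for the easiest function: if `f` satisfies the monotonically
decreasing condition (`G_f x < G_f y` implies `f x > f y`), then for any
fitness `g` with the same optimal set (the common set of global maxima),
the expected runtime satisfies `G_f x ≤ G_g x` for every `x`. -/
theorem stmt4 {S : Type*} [Fintype S] [DecidableEq S]
    (Pm : S → S → ℝ) (opt : Set S) (f g Gf Gg : S → ℝ)
    (hPm0 : ∀ x y, 0 ≤ Pm x y) (hPm1 : ∀ x, ∑ y, Pm x y = 1)
    (hne : opt.Nonempty)
    (hoptf : ∀ x, x ∈ opt ↔ ∀ y, f y ≤ f x)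
    (hoptg : ∀ x, x ∈ opt ↔ ∀ y, g y ≤ g x)
    (hGf0 : ∀ x, 0 ≤ Gf x) (hGfopt : ∀ x ∈ opt, Gf x = 0)
    (hGfrec : ∀ x ∉ opt, Gf x = 1 + ∑ y, eaP Pm f x y * Gf y)
    (hGg0 : ∀ x, 0 ≤ Gg x) (hGgopt : ∀ x ∈ opt, Gg x = 0)
    (hGgrec : ∀ x ∉ opt, Gg x = 1 + ∑ y, eaP Pm g x y * Gg y)
    (hmono : ∀ x y, Gf x < Gf y → f y < f x) :
    ∀ x, Gf x ≤ Gg x := by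
  classical
  -- Step 1: Gf is a subsolution of the g-system.
  have hsub : ∀ x ∉ opt, Gf x ≤ 1 + ∑ y, eaP Pm g x y * Gf y := by
    intro x hx
    rw [hGfrec x hx, eaP_sum_mul Pm f Gf x, eaP_sum_mul Pm g Gf x]
    have hterm : ∑ y, (if f x < f y then Pm x y * (Gf y - Gf x) else 0)
        ≤ ∑ y, (if g x < g y then Pm x y * (Gf y - Gf x) else 0) := by
      refine Finset.sum_le_sum (fun y _ => ?_)
      by_cases hf : f x < f y <;> by_cases hg : g x < g y <;> simp [hf, hg]
      · -- f accepts, g rejects : term is nonpositive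
        have hle : Gf y ≤ Gf x := by
          by_contra hlt
          push_neg at hlt
          exact absurd (hmono x y hlt) (not_lt.mpr hf.le)
        exact mul_nonpos_of_nonneg_of_nonpos (hPm0 x y) (by linarith)
      · -- f rejects, g accepts : term is nonnegative
        have hle : Gf x ≤ Gf y := by
          by_contra hlt
          push_neg at hlt
          exact hf (hmono y x hlt)
        exact mul_nonneg (hPm0 x y) (by linarith)
    linarith
  -- Step 2: comparison principle.
  obtain ⟨o, ho⟩ := hne
  obtain ⟨xm, -, hxm⟩ := Finset.exists_max_image Finset.univ
    (fun x => Gf x - Gg x) ⟨o, Finset.mem_univ o⟩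
  set m : ℝ := Gf xm - Gg xm with hm_def
  by_cases hm : m ≤ 0
  · intro x
    have := hxm x (Finset.mem_univ x)
    linarith
  push_neg at hm
  exfalso
  set A : Finset S := Finset.univ.filter (fun x => Gf x - Gg x = m) with hA_def
  have hAopt : ∀ x ∈ A, x ∉ opt := by
    intro x hxA hxopt
    have hx : Gf x - Gg x = m := (Finset.mem_filter.mp hxA).2
    rw [hGfopt x hxopt, hGgopt x hxopt] at hx
    linarith
  -- A is closed under the g-kernel
  have hclosed : ∀ x ∈ A, ∀ y, eaP Pm g x y ≠ 0 → y ∈ A := by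
    intro x hxA y hy
    have hxopt := hAopt x hxA
    have hx : Gf x - Gg x = m := (Finset.mem_filter.mp hxA).2
    have h1 : Gf x - Gg x ≤ ∑ y, eaP Pm g x y * (Gf y - Gg y) := by
      have := hsub x hxopt
      have hr := hGgrec x hxopt
      have hsplit : ∑ y, eaP Pm g x y * (Gf y - Gg y)
          = ∑ y, eaP Pm g x y * Gf y - ∑ y, eaP Pm g x y * Gg y := by
        rw [← Finset.sum_sub_distrib]
        exact Finset.sum_congr rfl (fun y _ => by ring)
      rw [hsplit]
      linarith
    have hnn : ∀ z ∈ Finset.univ, 0 ≤ eaP Pm g x z * (m - (Gf z - Gg z)) := by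
      intro z _
      refine mul_nonneg (eaP_nonneg Pm g hPm0 hPm1 x z) ?_
      have := hxm z (Finset.mem_univ z)
      linarith
    have hsum0 : ∑ z, eaP Pm g x z * (m - (Gf z - Gg z)) = 0 := by
      have hexp : ∑ z, eaP Pm g x z * (m - (Gf z - Gg z))
          = (∑ z, eaP Pm g x z) * m - ∑ z, eaP Pm g x z * (Gf z - Gg z) := by
        rw [Finset.sum_mul, ← Finset.sum_sub_distrib]
        exact Finset.sum_congr rfl (fun z _ => by ring)
      have hle : ∑ z, eaP Pm g x z * (m - (Gf z - Gg z)) ≤ 0 := by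
        rw [hexp, eaP_rowsum]
        linarith
      have hge : 0 ≤ ∑ z, eaP Pm g x z * (m - (Gf z - Gg z)) :=
        Finset.sum_nonneg hnn
      linarith
    have := (Finset.sum_eq_zero_iff_of_nonneg hnn).mp hsum0 y (Finset.mem_univ y)
    rcases mul_eq_zero.mp this with h | h
    · exact absurd h hy
    · refine Finset.mem_filter.mpr ⟨Finset.mem_univ y, ?_⟩
      linarith
  -- pick a minimizer of Gg on A
  have hAne : A.Nonempty := ⟨xm, Finset.mem_filter.mpr ⟨Finset.mem_univ xm, rfl⟩⟩
  obtain ⟨x₀, hx₀A, hx₀min⟩ := Finset.exists_min_image A Gg hAne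
  have hx₀opt := hAopt x₀ hx₀A
  have hge : ∑ y, eaP Pm g x₀ y * Gg y ≥ ∑ y, eaP Pm g x₀ y * Gg x₀ := by
    refine Finset.sum_le_sum (fun y _ => ?_)
    by_cases hzero : eaP Pm g x₀ y = 0
    · simp [hzero]
    · exact mul_le_mul_of_nonneg_left (hx₀min y (hclosed x₀ hx₀A y hzero))
        (eaP_nonneg Pm g hPm0 hPm1 x₀ y)
  have hrow : ∑ y, eaP Pm g x₀ y * Gg x₀ = Gg x₀ := by
    rw [← Finset.sum_mul, eaP_rowsum, one_mul]
  have := hGgrec x₀ hx₀opt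
  linarith
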